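/- Let f ∈ ℂ[y1,y2] with partial derivatives f1, f2, and let p = (b1,b2) satisfy f(p)=0, f2(p) ≠ 0, and (f1(p)^2+f2(p)^2)(b2-k0)^2 = f2(p)^2 d0^2 with d0 ≠ 0. Define q = (a1,a2) with a1 = (-f1(p)b2 + f2(p)b1 + f1(p)k0)/f2(p), a2 = k0, and u0 = 1/(f1(p)^2+f2(p)^2). Then (p,q,u0) satisfies: (a1-b1)^2+(a2-b2)^2 = d0^2, -f2(p)(a1-b1)+f1(p)(a2-b2) = 0, u0·(f1(p)^2+f2(p)^2) = 1, and a2 = k0. -/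

import Mathlib

open MvPolynomial

/-- a non-ramification point `p = (b1,b2)` of the curve lying on the auxiliary
curve `S(d0,k0)` lifts to a solution `(p,q,u0)` of the offset-defining system: with
`a1 = (-f1(p)b2 + f2(p)b1 + f1(p)k0)/f2(p)`, `a2 = k0`, `u0 = 1/(f1(p)²+f2(p)²)`, the
circle, normal-line, non-isotropy and line equations all hold. -/
theorem lift_to_offset_system
    (f : MvPolynomial (Fin 2) ℂ) (b1 b2 d0 k0 : ℂ)
    (hp : eval ![b1, b2] f = 0)
    (h2 : eval ![b1, b2] (pderiv 1 f) ≠ 0)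
    (hd : d0 ≠ 0)
    (hs : (eval ![b1, b2] (pderiv 0 f) ^ 2 + eval ![b1, b2] (pderiv 1 f) ^ 2)
            * (b2 - k0) ^ 2
          = eval ![b1, b2] (pderiv 1 f) ^ 2 * d0 ^ 2) :
    let v1 := eval ![b1, b2] (pderiv 0 f)
    let v2 := eval ![b1, b2] (pderiv 1 f)
    let a1 := (-v1 * b2 + v2 * b1 + v1 * k0) / v2
    let a2 := k0
    let u0 := 1 / (v1 ^ 2 + v2 ^ 2)
    (a1 - b1) ^ 2 + (a2 - b2) ^ 2 = d0 ^ 2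
      ∧ -v2 * (a1 - b1) + v1 * (a2 - b2) = 0
      ∧ u0 * (v1 ^ 2 + v2 ^ 2) = 1
      ∧ a2 = k0 := by
  intro v1 v2 a1 a2 u0
  have hsum : v1 ^ 2 + v2 ^ 2 ≠ 0 := by
    intro h
    rw [show (eval ![b1, b2] (pderiv 0 f) ^ 2 + eval ![b1, b2] (pderiv 1 f) ^ 2) = v1 ^ 2 + v2 ^ 2 from rfl, h, zero_mul] at hs
    exact (mul_ne_zero (pow_ne_zero 2 h2) (pow_ne_zero 2 hd)) hs.symm
  refine ⟨?_, ?_, ?_, rfl⟩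
  · show ((-v1 * b2 + v2 * b1 + v1 * k0) / v2 - b1) ^ 2 + (k0 - b2) ^ 2 = d0 ^ 2
    have hv2 : v2 ≠ 0 := h2
    field_simp
    have hs' : (v1 ^ 2 + v2 ^ 2) * (b2 - k0) ^ 2 = v2 ^ 2 * d0 ^ 2 := hs
    linear_combination hs'
  · show -v2 * ((-v1 * b2 + v2 * b1 + v1 * k0) / v2 - b1) + v1 * (k0 - b2) = 0
    field_simp
    linear_combination (v1 * b2 - v1 * k0 - v2 * b1) * (mul_inv_cancel₀ (show v2 ≠ 0 from h2))
  · exact one_div_mul_cancel hsum
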